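/- arXiv:0711.4459 — 5 statements merged into one kernel-verified Lean document; each statement's English description precedes it below -/
import Mathlib

section
/- Let H be a finite group, let g ∈ H be an involution, and let N be a normal subgroup of H of odd order. Then |H : C_H(g)| = |N : C_N(g)| · |H/N : C_{H/N}(gN)|. -/
open Subgroup

/-- Key lemma: the preimage of the centralizer of `gN` in `H/N` is `N ⊔ C_H(g)`. -/
lemma comap_centralizer_eq_sup {H : Type*} [Group H] [Finite H]
    (g : H) (hg2 : g ^ 2 = 1) (N : Subgroup H) [N.Normal] (hN : Odd (Nat.card N)) :
    (Subgroup.centralizer {(g : H ⧸ N)}).comap (QuotientGroup.mk' N) =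
      N ⊔ Subgroup.centralizer {g} := by
  have hgg : g * g = 1 := by rw [← sq]; exact hg2
  have ginv : g⁻¹ = g := inv_eq_of_mul_eq_one_left hgg
  apply le_antisymm
  · intro h hh
    rw [Subgroup.mem_comap, Subgroup.mem_centralizer_singleton_iff] at hh
    -- hh : (h : H⧸N) * g = g * h
    set t : H := h⁻¹ * g * h with ht
    have htt : t * t = 1 := by
      simp only [ht]
      calc h⁻¹ * g * h * (h⁻¹ * g * h) = h⁻¹ * (g * g) * h := by group
        _ = 1 := by rw [hgg]; group
    set u : H := g * t with hu
    simp only [QuotientGroup.mk'_apply] at hh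
    have huN : u ∈ N := by
      have e1 : ((h : H ⧸ N))⁻¹ * ↑g * ↑h = (g : H ⧸ N) := by
        rw [mul_assoc, ← hh, ← mul_assoc, inv_mul_cancel, one_mul]
      rw [← QuotientGroup.eq_one_iff, hu, ht, QuotientGroup.mk_mul, QuotientGroup.mk_mul,
        QuotientGroup.mk_mul, QuotientGroup.mk_inv, e1, ← QuotientGroup.mk_mul, hgg,
        QuotientGroup.mk_one]
    have hut : g * u * g = u⁻¹ := by
      have h1 : t⁻¹ = t := inv_eq_of_mul_eq_one_left htt
      calc g * u * g = g * g * t * g := by rw [hu]; group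
        _ = t * g := by rw [hgg]; group
        _ = t⁻¹ * g⁻¹ := by rw [h1, ginv]
        _ = u⁻¹ := by rw [hu]; group
    have hconj : ∀ j : ℕ, g * u ^ j * g = (u ^ j)⁻¹ := by
      intro j
      have := conj_pow (i := j) (a := g) (b := u)
      rw [ginv] at this
      rw [← this, hut]
      rw [inv_pow]
    -- u has odd order
    have hou : Odd (orderOf u) := by
      have hd : orderOf (⟨u, huN⟩ : N) ∣ Nat.card N := orderOf_dvd_natCard _
      have he : orderOf ((⟨u, huN⟩ : N) : H) = orderOf (⟨u, huN⟩ : N) := orderOf_submonoid _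
      rw [show ((⟨u, huN⟩ : N) : H) = u from rfl] at he
      rw [← he] at hd
      rcases Nat.even_or_odd (orderOf u) with hev | ho
      · exfalso
        have h2 : 2 ∣ Nat.card N := dvd_trans hev.two_dvd hd
        rcases h2 with ⟨c, hc⟩
        exact Nat.not_even_iff_odd.mpr hN ⟨c, by omega⟩
      · exact ho
    obtain ⟨k, hk⟩ := hou
    set n : H := u ^ (k + 1) with hn
    have hnN : n ∈ N := N.pow_mem huN _
    have hn2 : n * n = u := by
      rw [hn, ← pow_add]
      have : k + 1 + (k + 1) = orderOf u + 1 := by omega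
      rw [this, pow_succ, pow_orderOf_eq_one, one_mul]
    have hgn : g * n * g = n⁻¹ := by rw [hn]; exact hconj (k + 1)
    have hc : h * n⁻¹ ∈ Subgroup.centralizer {g} := by
      rw [Subgroup.mem_centralizer_singleton_iff]
      have key : n⁻¹ * g * n = t := by
        have hgn' : g * n = n⁻¹ * g := by
          rw [← hgn, mul_assoc (g*n) g g, hgg, mul_one]
        calc n⁻¹ * g * n = n⁻¹ * (g * n) := by group
          _ = n⁻¹ * (n⁻¹ * g) := by rw [hgn']
          _ = (n * n)⁻¹ * g := by group
          _ = u⁻¹ * g := by rw [hn2]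
          _ = t⁻¹ * g⁻¹ * g := by rw [hu]; group
          _ = t := by rw [inv_eq_of_mul_eq_one_left htt]; group
      have : n⁻¹ * g * n = h⁻¹ * g * h := by rw [key, ht]
      calc h * n⁻¹ * g = h * (n⁻¹ * g * n) * n⁻¹ := by group
        _ = h * (h⁻¹ * g * h) * n⁻¹ := by rw [this]
        _ = g * (h * n⁻¹) := by group
    have : h = (h * n⁻¹) * n := by group
    rw [this]
    exact mul_mem (Subgroup.mem_sup_right hc) (Subgroup.mem_sup_left hnN)
  · apply sup_le
    · intro x hx
      rw [Subgroup.mem_comap, Subgroup.mem_centralizer_singleton_iff]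
      have : ((x : H) : H ⧸ N) = 1 := (QuotientGroup.eq_one_iff x).mpr hx
      simp [QuotientGroup.mk'_apply, this]
    · intro x hx
      rw [Subgroup.mem_centralizer_singleton_iff] at hx
      rw [Subgroup.mem_comap, Subgroup.mem_centralizer_singleton_iff]
      simp only [QuotientGroup.mk'_apply]
      rw [← QuotientGroup.mk_mul, ← QuotientGroup.mk_mul, hx]

/-- Let `H` be a finite group, `g ∈ H` an involution, and `N ⊴ H` of odd
order. Then `|H : C_H(g)| = |N : C_N(g)| · |H/N : C_{H/N}(gN)|`. -/
theorem index_centralizer_eq_of_odd_normal {H : Type*} [Group H] [Finite H]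
    (g : H) (hg1 : g ≠ 1) (hg2 : g ^ 2 = 1)
    (N : Subgroup H) [N.Normal] (hN : Odd (Nat.card N)) :
    (Subgroup.centralizer {g}).index =
      (Subgroup.centralizer {g}).relIndex N *
        (Subgroup.centralizer {(g : H ⧸ N)}).index := by
  set C := Subgroup.centralizer {g} with hC
  set Q := Subgroup.centralizer {(g : H ⧸ N)} with hQ
  set P := Q.comap (QuotientGroup.mk' N) with hP
  have hPsup : P = N ⊔ C := comap_centralizer_eq_sup g hg2 N hN
  have hCP : C ≤ P := hPsup ▸ le_sup_right
  have hQP : P.index = Q.index :=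
    Q.index_comap_of_surjective (QuotientGroup.mk'_surjective N)
  have hrel : C.relIndex P = C.relIndex N := by
    have h1 : (C ⊓ N).relIndex C * C.relIndex P = (C ⊓ N).relIndex P :=
      relIndex_mul_relIndex _ _ _ inf_le_left hCP
    have h2 : (C ⊓ N).relIndex N * N.relIndex P = (C ⊓ N).relIndex P :=
      relIndex_mul_relIndex _ _ _ inf_le_right (hPsup ▸ le_sup_left)
    have h3 : (C ⊓ N).relIndex N = C.relIndex N := inf_relIndex_right C N
    have h4 : (C ⊓ N).relIndex C = N.relIndex C := inf_relIndex_left C N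
    have h5 : N.relIndex P = N.relIndex C := by
      rw [hPsup, sup_comm]; exact relIndex_sup_right C N
    have hne : N.relIndex C ≠ 0 := by
      rw [Subgroup.relIndex]
      exact Subgroup.index_ne_zero_of_finite
    apply Nat.eq_of_mul_eq_mul_left (Nat.pos_of_ne_zero hne)
    rw [← h4, h1, ← h2, h3, h5, mul_comm]
    rw [h4]
  rw [← relIndex_mul_index hCP, hrel, hQP]
end

section
/- Let H be a finite group, let N be a normal subgroup of H, let g be an involution contained in N, and let P be a Sylow 2-subgroup of N. Then |H : C_H(g)| · |g^N ∩ P| = |N : C_N(g)| · |g^H ∩ P|, where g^H (respectively g^N) denotes the set of H-conjugates (respectively N-conjugates) of g. -/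
open Pointwise

private lemma conj_count {G : Type*} [Group G] (a : G) (s : Set G) :
    Nat.card {h : G // h * a * h⁻¹ ∈ s} =
      Nat.card (Subgroup.centralizer ({a} : Set G)) *
        Nat.card {x : G | (∃ h : G, h * a * h⁻¹ = x) ∧ x ∈ s} := by
  classical
  have hσ : ∀ x : {x : G | (∃ h : G, h * a * h⁻¹ = x) ∧ x ∈ s},
      ∃ h : G, h * a * h⁻¹ = (x : G) := fun x => x.2.1
  choose σ hσ using hσ
  have e : {h : G // h * a * h⁻¹ ∈ s} ≃
      (Subgroup.centralizer ({a} : Set G)) ×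
        {x : G | (∃ h : G, h * a * h⁻¹ = x) ∧ x ∈ s} := by
    refine ⟨fun h => ⟨⟨(σ ⟨h.1 * a * h.1⁻¹, ⟨h.1, rfl⟩, h.2⟩)⁻¹ * h.1, ?_⟩,
        ⟨h.1 * a * h.1⁻¹, ⟨h.1, rfl⟩, h.2⟩⟩,
      fun p => ⟨σ p.2 * p.1.1, ?_⟩, ?_, ?_⟩
    · set x : {x : G | (∃ h : G, h * a * h⁻¹ = x) ∧ x ∈ s} :=
        ⟨h.1 * a * h.1⁻¹, ⟨h.1, rfl⟩, h.2⟩ with hx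
      rw [Subgroup.mem_centralizer_singleton_iff]
      have h2 : σ x * a * (σ x)⁻¹ = h.1 * a * h.1⁻¹ := hσ x
      calc (σ x)⁻¹ * h.1 * a = (σ x)⁻¹ * (h.1 * a * h.1⁻¹) * h.1 := by group
        _ = (σ x)⁻¹ * (σ x * a * (σ x)⁻¹) * h.1 := by rw [h2]
        _ = a * ((σ x)⁻¹ * h.1) := by group
    · have hc : ↑p.1 * a = a * ↑p.1 :=
        Subgroup.mem_centralizer_singleton_iff.mp p.1.2
      have hca : (p.1 : G) * a * (p.1 : G)⁻¹ = a := by rw [hc]; group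
      have hre : (σ p.2 * ↑p.1) * a * (σ p.2 * ↑p.1)⁻¹
          = σ p.2 * ((p.1 : G) * a * (p.1 : G)⁻¹) * (σ p.2)⁻¹ := by group
      rw [hre, hca, hσ p.2]
      exact p.2.2.2
    · intro h
      exact Subtype.ext (mul_inv_cancel_left _ _)
    · rintro ⟨c, x⟩
      have hc : (c : G) * a = a * ↑c := Subgroup.mem_centralizer_singleton_iff.mp c.2
      have hca : (c : G) * a * (c : G)⁻¹ = a := by rw [hc]; group
      have hval : (σ x * ↑c) * a * (σ x * ↑c)⁻¹ = ↑x := by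
        rw [show (σ x * ↑c) * a * (σ x * ↑c)⁻¹
            = σ x * ((c : G) * a * (c : G)⁻¹) * (σ x)⁻¹ from by group, hca, hσ x]
      have haux : ∀ y : {x : G | (∃ h : G, h * a * h⁻¹ = x) ∧ x ∈ s}, y = x →
          (σ y)⁻¹ * (σ x * ↑c) = ↑c := by
        rintro y rfl; exact inv_mul_cancel_left _ _
      refine Prod.ext (Subtype.ext (haux _ (Subtype.ext hval))) (Subtype.ext hval)
  rw [Nat.card_congr e, Nat.card_prod]

/-- Let `H` be a finite group, `N ⊴ H`, `g ∈ N` an involution, and `P` a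
Sylow `2`-subgroup of `N`.  Then `|H : C_H(g)| · |g^N ∩ P| = |N : C_N(g)| · |g^H ∩ P|`. -/
theorem index_centralizer_mul_card_conjugates_inter_sylow {H : Type*} [Group H] [Finite H]
    (N : Subgroup H) [N.Normal] (g : H) (hgN : g ∈ N) (hg1 : g ≠ 1) (hg2 : g ^ 2 = 1)
    (P : Sylow 2 N) :
    (Subgroup.centralizer {g}).index *
        Nat.card {x : H | (∃ n ∈ N, n * g * n⁻¹ = x) ∧ x ∈ (P : Subgroup N).map N.subtype} =
      (Subgroup.centralizer {g}).relIndex N *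
        Nat.card {x : H | (∃ h : H, h * g * h⁻¹ = x) ∧ x ∈ (P : Subgroup N).map N.subtype} := by
  classical
  set S : Subgroup H := (P : Subgroup N).map N.subtype with hS
  set g' : N := ⟨g, hgN⟩ with hg'
  have frat : (Subgroup.normalizer (S : Set H)) ⊔ N = ⊤ := Sylow.normalizer_sup_eq_top P
  -- coset-independence of the count (Frattini)
  have eC : ∀ u : H, Nonempty ({n : N // (u * ↑n) * g * (u * ↑n)⁻¹ ∈ (S : Set H)} ≃
      {n : N // (↑n : H) * g * (↑n : H)⁻¹ ∈ (S : Set H)}) := by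
    intro u
    have hu : u ∈ ((Subgroup.normalizer (S : Set H)) : Set H) * (N : Set H) := by
      rw [← Subgroup.mul_normal (Subgroup.normalizer (S : Set H)) N, frat]
      simp
    obtain ⟨w, hw, m, hm, rfl⟩ := hu
    beta_reduce
    rw [SetLike.mem_coe, Subgroup.mem_normalizer_iff] at hw
    refine ⟨Equiv.subtypeEquiv (Equiv.mulLeft (⟨m, hm⟩ : N)) fun n => ?_⟩
    have hrw : ((w * m) * ↑n) * g * ((w * m) * ↑n)⁻¹
        = w * ((m * ↑n) * g * (m * ↑n)⁻¹) * w⁻¹ := by group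
    rw [SetLike.mem_coe, SetLike.mem_coe, hrw, ← hw]
    simp [mul_assoc]
  -- fibers of the quotient map
  have eFib : ∀ q : H ⧸ N,
      {a : {h : H // h * g * h⁻¹ ∈ (S : Set H)} // QuotientGroup.mk a.1 = q} ≃
        {n : N // (q.out * ↑n) * g * (q.out * ↑n)⁻¹ ∈ (S : Set H)} := by
    intro q
    refine ⟨fun a => ⟨⟨q.out⁻¹ * a.1.1, ?_⟩, ?_⟩,
      fun n => ⟨⟨q.out * ↑n.1, ?_⟩, ?_⟩, ?_, ?_⟩
    · have h1 : (q.out : H ⧸ N) = QuotientGroup.mk a.1.1 := by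
        rw [a.2, QuotientGroup.out_eq']
      exact QuotientGroup.eq.mp h1
    · simpa [mul_inv_cancel_left] using a.1.2
    · simpa [mul_inv_cancel_left] using n.2
    · rw [QuotientGroup.mk_mul_of_mem _ n.1.2, QuotientGroup.out_eq']
    · intro a
      exact Subtype.ext (Subtype.ext (mul_inv_cancel_left _ _))
    · intro n
      exact Subtype.ext (Subtype.ext (inv_mul_cancel_left _ _))
  have e1 : {h : H // h * g * h⁻¹ ∈ (S : Set H)} ≃
      (H ⧸ N) × {n : N // (↑n : H) * g * (↑n : H)⁻¹ ∈ (S : Set H)} :=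
    ((Equiv.sigmaFiberEquiv
        (fun a : {h : H // h * g * h⁻¹ ∈ (S : Set H)} => QuotientGroup.mk a.1)).symm.trans
      (Equiv.sigmaCongrRight fun q => (eFib q).trans (eC q.out).some)).trans
      (Equiv.sigmaEquivProd _ _)
  have hL2 : Nat.card {h : H // h * g * h⁻¹ ∈ (S : Set H)} =
      N.index * Nat.card {n : N // (↑n : H) * g * (↑n : H)⁻¹ ∈ (S : Set H)} := by
    rw [Nat.card_congr e1, Nat.card_prod, Subgroup.index]
  -- conjugation counts
  have h1 := conj_count g (S : Set H)
  have h2 := conj_count g' (((P : Subgroup N) : Set N))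
  -- bridge: the N-internal count equals the H-valued count over N
  have ebridge : {n : N // n * g' * n⁻¹ ∈ ((P : Subgroup N) : Set N)} ≃
      {n : N // (↑n : H) * g * (↑n : H)⁻¹ ∈ (S : Set H)} := by
    refine Equiv.subtypeEquivRight fun n => ?_
    have hcoe : ((n * g' * n⁻¹ : N) : H) = (↑n : H) * g * (↑n : H)⁻¹ := by
      simp [hg']
    rw [SetLike.mem_coe, SetLike.mem_coe, ← hcoe, hS]
    exact (Subgroup.mem_map_iff_mem (Subgroup.subtype_injective N)).symm
  -- bridge for the conjugate-set cardinalities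
  have himg : {x : H | (∃ n ∈ N, n * g * n⁻¹ = x) ∧ x ∈ S} =
      (fun y : N => (y : H)) ''
        {x : N | (∃ h : N, h * g' * h⁻¹ = x) ∧ x ∈ ((P : Subgroup N) : Set N)} := by
    ext x
    constructor
    · rintro ⟨⟨n, hnN, hnx⟩, hxS⟩
      have hxN : x ∈ N := Subgroup.map_subtype_le _ hxS
      obtain ⟨y, hyP, hyx⟩ := hxS
      refine ⟨⟨x, hxN⟩, ⟨⟨⟨n, hnN⟩, Subtype.ext (by simp [hg', hnx])⟩, ?_⟩, rfl⟩
      have : y = (⟨x, hxN⟩ : N) := Subtype.ext hyx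
      rwa [this] at hyP
    · rintro ⟨y, ⟨⟨n, hny⟩, hyP⟩, rfl⟩
      refine ⟨⟨↑n, n.2, ?_⟩, Subgroup.mem_map_of_mem _ hyP⟩
      · have := congrArg (fun z : N => (z : H)) hny
        simpa [hg'] using this
  have hcardA : Nat.card {x : H | (∃ n ∈ N, n * g * n⁻¹ = x) ∧ x ∈ S} =
      Nat.card {x : N | (∃ h : N, h * g' * h⁻¹ = x) ∧ x ∈ ((P : Subgroup N) : Set N)} := by
    rw [himg]
    exact Nat.card_image_of_injective (fun a b hab => Subtype.ext hab) _
  -- centralizer bridge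
  have hCN : Subgroup.centralizer ({g'} : Set N) = (Subgroup.centralizer {g}).subgroupOf N := by
    ext n
    simp [Subgroup.mem_subgroupOf, Subgroup.mem_centralizer_singleton_iff, Subtype.ext_iff, hg']
  have hrel : (Subgroup.centralizer {g}).relIndex N *
      Nat.card (Subgroup.centralizer ({g'} : Set N)) = Nat.card N := by
    rw [show (Subgroup.centralizer {g}).relIndex N
        = (Subgroup.centralizer ({g'} : Set N)).index from by rw [hCN]; rfl]
    exact Subgroup.index_mul_card _
  have hidx : (Subgroup.centralizer {g}).index *
      Nat.card (Subgroup.centralizer ({g} : Set H)) = Nat.card H :=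
    Subgroup.index_mul_card _
  have hind : N.index * Nat.card N = Nat.card H := Subgroup.index_mul_card N
  -- abbreviations
  set cC := Nat.card (Subgroup.centralizer ({g} : Set H)) with hcC
  set cCN := Nat.card (Subgroup.centralizer ({g'} : Set N)) with hcCN
  set cA := Nat.card {x : H | (∃ n ∈ N, n * g * n⁻¹ = x) ∧ x ∈ S} with hcA
  set cB := Nat.card {x : H | (∃ h : H, h * g * h⁻¹ = x) ∧ x ∈ S} with hcB
  -- rewrite h1 : count over H
  have h1' : Nat.card {h : H // h * g * h⁻¹ ∈ (S : Set H)} = cC * cB := h1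
  have h2' : Nat.card {n : N // (↑n : H) * g * (↑n : H)⁻¹ ∈ (S : Set H)} = cCN * cA := by
    rw [← Nat.card_congr ebridge, h2, hcardA]
  -- final arithmetic
  have key : (Subgroup.centralizer {g}).index * cA * (cC * cCN) =
      (Subgroup.centralizer {g}).relIndex N * cB * (cC * cCN) := by
    calc (Subgroup.centralizer {g}).index * cA * (cC * cCN)
        = ((Subgroup.centralizer {g}).index * cC) * (cCN * cA) := by ring
      _ = Nat.card H * (cCN * cA) := by rw [hidx]
      _ = (N.index * Nat.card N) * (cCN * cA) := by rw [hind]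
      _ = Nat.card N * (N.index * (cCN * cA)) := by ring
      _ = Nat.card N * (N.index *
            Nat.card {n : N // (↑n : H) * g * (↑n : H)⁻¹ ∈ (S : Set H)}) := by rw [h2']
      _ = Nat.card N * Nat.card {h : H // h * g * h⁻¹ ∈ (S : Set H)} := by rw [hL2]
      _ = Nat.card N * (cC * cB) := by rw [h1']
      _ = ((Subgroup.centralizer {g}).relIndex N * cCN) * (cC * cB) := by rw [hrel]
      _ = (Subgroup.centralizer {g}).relIndex N * cB * (cC * cCN) := by ring
  have hpos : 0 < cC * cCN := Nat.mul_pos Nat.card_pos Nat.card_pos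
  exact Nat.eq_of_mul_eq_mul_right hpos key
end

section
/- Let p be a prime with p ≥ 7 and p ≡ 1 (mod 3), let q = p^a, and let F be a finite field with |F| = q. Suppose q ≡ 3 (mod 4), q > 7, n > 2 and (q, n) ≠ (31, 4). Then every 2-subgroup P of GL_n(F) satisfies |P| < q^{n-1} + q^{n-2} + ⋯ + q + 1. -/
-- characterization of powers of 2 dividing
lemma aux_pow2_dvd_iff (x k : ℕ) (hx : x ≠ 0) : 2 ^ k ∣ x ↔ k ≤ padicValNat 2 x := by
  rw [← Nat.factorization_def x Nat.prime_two]
  exact Nat.Prime.pow_dvd_iff_le_factorization Nat.prime_two hx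

lemma aux_v2_eq_one (x : ℕ) (h : x % 4 = 2) : padicValNat 2 x = 1 := by
  have hx : x ≠ 0 := by omega
  have h1 : 2 ^ 1 ∣ x := by omega
  have h2 : ¬ 2 ^ 2 ∣ x := by norm_num; omega
  rw [aux_pow2_dvd_iff x 1 hx] at h1
  rw [aux_pow2_dvd_iff x 2 hx] at h2
  omega

-- odd power case
lemma aux_v2_odd (q e : ℕ) (hq : q % 4 = 3) (he : e % 2 = 1) :
    padicValNat 2 (q ^ e - 1) = 1 := by
  apply aux_v2_eq_one
  have h9 : (9:ℕ) ^ (e / 2) % 4 = 1 := by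
    rw [Nat.pow_mod]; norm_num
  have hqe : q ^ e % 4 = 3 := by
    rw [Nat.pow_mod, hq]
    have : e = 2 * (e/2) + 1 := by omega
    rw [this, pow_succ, pow_mul]
    norm_num
    omega
  have : 1 ≤ q ^ e := Nat.one_le_pow _ _ (by omega)
  omega

-- even power case: v2(q^e - 1) = v2(q+1) + v2(e)  (q ≡ 3 mod 4, e even, e ≠ 0)
lemma aux_v2_even (q e : ℕ) (hq : q % 4 = 3) (he : e % 2 = 0) (he0 : e ≠ 0) :
    padicValNat 2 (q ^ e - 1) = padicValNat 2 (q + 1) + padicValNat 2 e := by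
  have h := padicValNat.pow_two_sub_pow (x := q) (y := 1) (by omega) (by omega)
    (by omega) he0 (Nat.even_iff.2 he)
  simp only [one_pow] at h
  have hqm1 : padicValNat 2 (q - 1) = 1 := aux_v2_eq_one _ (by omega)
  omega

-- v2(m!) ≤ m - 1 for m ≥ 1
lemma aux_v2_factorial (m : ℕ) (hm : 1 ≤ m) : padicValNat 2 (m.factorial) + 1 ≤ m := by
  haveI : Fact (Nat.Prime 2) := ⟨Nat.prime_two⟩
  have h := sub_one_mul_padicValNat_factorial (p := 2) m
  have hd : 1 ≤ (Nat.digits 2 m).sum := by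
    have hne : Nat.digits 2 m ≠ [] := Nat.digits_ne_nil_iff_ne_zero.2 (by omega)
    have hlast := Nat.getLast_digit_ne_zero 2 (m := m) (by omega)
    have hmem := List.getLast_mem hne
    have h2 := List.single_le_sum (fun (x:ℕ) _ => Nat.zero_le x) _ hmem
    omega
  have hsum_le : (Nat.digits 2 m).sum ≤ m := Nat.digit_sum_le 2 m
  omega

-- v2(2*j) = 1 + v2 j for j ≠ 0
lemma aux_v2_two_mul (j : ℕ) (hj : j ≠ 0) : padicValNat 2 (2 * j) = 1 + padicValNat 2 j := by
  haveI : Fact (Nat.Prime 2) := ⟨Nat.prime_two⟩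
  rw [padicValNat.mul (by norm_num) hj, padicValNat.self (by norm_num)]

-- the running sum
lemma aux_S_even (q τ : ℕ) (hq : q % 4 = 3) (hτ : τ = padicValNat 2 (q + 1)) (m : ℕ) :
    ∑ i ∈ Finset.range (2 * m), padicValNat 2 (q ^ (i + 1) - 1)
      = 2 * m + m * τ + padicValNat 2 (m.factorial) := by
  induction m with
  | zero => simp
  | succ m ih =>
    have h1 : 2 * (m + 1) = (2 * m + 1) + 1 := by ring
    rw [h1, Finset.sum_range_succ, Finset.sum_range_succ, ih]
    have hodd : padicValNat 2 (q ^ (2 * m + 1) - 1) = 1 := aux_v2_odd q _ hq (by omega)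
    have heven : padicValNat 2 (q ^ (2 * m + 1 + 1) - 1) = τ + (1 + padicValNat 2 (m + 1)) := by
      rw [aux_v2_even q _ hq (by omega) (by omega), hτ]
      congr 1
      have : 2 * m + 1 + 1 = 2 * (m + 1) := by ring
      rw [this, aux_v2_two_mul _ (by omega)]
    have hfact : padicValNat 2 ((m + 1).factorial)
        = padicValNat 2 (m + 1) + padicValNat 2 (m.factorial) := by
      haveI : Fact (Nat.Prime 2) := ⟨Nat.prime_two⟩
      rw [Nat.factorial_succ, padicValNat.mul (by omega) (Nat.factorial_ne_zero m)]
    have hr : (m + 1) * τ = m * τ + τ := by ring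
    omega

lemma aux_v2_prod (q n : ℕ) (hq : q % 2 = 1) (hq1 : 2 ≤ q) :
    padicValNat 2 (∏ i ∈ Finset.range n, (q ^ n - q ^ i))
      = ∑ i ∈ Finset.range n, padicValNat 2 (q ^ (i + 1) - 1) := by
  have hne : ∀ i ∈ Finset.range n, q ^ n - q ^ i ≠ 0 := by
    intro i hi
    rw [Finset.mem_range] at hi
    have : q ^ i < q ^ n := Nat.pow_lt_pow_right (by omega) hi
    omega
  have hterm : ∀ i ∈ Finset.range n,
      padicValNat 2 (q ^ n - q ^ i) = padicValNat 2 (q ^ (n - i) - 1) := by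
    intro i hi
    rw [Finset.mem_range] at hi
    have hsplit : q ^ n = q ^ i * q ^ (n - i) := by
      rw [← pow_add]; congr 1; omega
    have hfac : q ^ n - q ^ i = q ^ i * (q ^ (n - i) - 1) := by
      rw [hsplit, Nat.mul_sub, mul_one]
    haveI : Fact (Nat.Prime 2) := ⟨Nat.prime_two⟩
    have h1 : q ^ (n - i) - 1 ≠ 0 := by
      have : q ^ 1 ≤ q ^ (n - i) := Nat.pow_le_pow_right (by omega) (by omega)
      simp at this; omega
    rw [hfac, padicValNat.mul (by positivity) h1,
      padicValNat.eq_zero_of_not_dvd, zero_add]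
    intro hdvd
    have := Nat.Prime.dvd_of_dvd_pow Nat.prime_two hdvd
    omega
  have hfac2 : padicValNat 2 (∏ i ∈ Finset.range n, (q ^ n - q ^ i))
      = ∑ i ∈ Finset.range n, padicValNat 2 (q ^ n - q ^ i) := by
    rw [← Nat.factorization_def _ Nat.prime_two, Nat.factorization_prod hne]
    rw [Finsupp.finset_sum_apply]
    exact Finset.sum_congr rfl fun i _ => Nat.factorization_def _ Nat.prime_two
  rw [hfac2, Finset.sum_congr rfl hterm]
  rw [← Finset.sum_range_reflect (fun i => padicValNat 2 (q ^ (i + 1) - 1)) n]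
  exact Finset.sum_congr rfl fun i hi => by
    rw [Finset.mem_range] at hi
    have h : n - 1 - i + 1 = n - i := by omega
    rw [h]

lemma aux_key (q n t : ℕ) (hq : 19 ≤ q) (hn : 3 ≤ n) (ht : t ∣ q + 1)
    (ht2 : ∃ τ : ℕ, t = 2 ^ τ) (hex : ¬(q = 31 ∧ n = 4)) :
    2 ^ (n + n / 2 - 1) * t ^ (n / 2) ≤ q ^ (n - 1) := by
  have htle : t ≤ q + 1 := Nat.le_of_dvd (by omega) ht
  obtain ⟨c, hc⟩ := ht
  have htpos : 1 ≤ t := by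
    obtain ⟨τ, rfl⟩ := ht2
    exact Nat.one_le_two_pow
  rcases Nat.even_or_odd n with he | ho
  case inr =>
    -- n odd, n = 2m+1
    obtain ⟨m, hm⟩ := ho
    have hm1 : 1 ≤ m := by omega
    have e1 : n + n / 2 - 1 = 3 * m := by omega
    have e2 : n / 2 = m := by omega
    have e3 : n - 1 = 2 * m := by omega
    rw [e1, e2, e3]
    calc 2 ^ (3 * m) * t ^ m = (8 * t) ^ m := by
          rw [mul_pow]
          congr 1
          rw [show (8:ℕ) = 2 ^ 3 from rfl, ← pow_mul]
      _ ≤ (q ^ 2) ^ m := by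
          apply Nat.pow_le_pow_left
          nlinarith
      _ = q ^ (2 * m) := by rw [← pow_mul, mul_comm]
  case inl =>
    -- n even, n = 2m, m ≥ 2
    obtain ⟨m, hm⟩ := he
    have hm2 : 2 ≤ m := by omega
    have e1 : n + n / 2 - 1 = 3 * m - 1 := by omega
    have e2 : n / 2 = m := by omega
    have e3 : n - 1 = 2 * m - 1 := by omega
    rw [e1, e2, e3]
    have hkey : (8 * t) ^ 2 ≤ 2 * q ^ 3 →
        2 ^ (3 * m - 1) * t ^ m ≤ q ^ (2 * m - 1) := by
      intro hA2
      have hdbl : 2 * (2 ^ (3 * m - 1) * t ^ m) = (8 * t) ^ m := by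
        rw [mul_pow, show (8:ℕ) = 2 ^ 3 from rfl, ← pow_mul, ← mul_assoc, ← pow_succ']
        congr 2
        omega
      have hsq : ((8 * t) ^ m) ^ 2 ≤ (2 * q ^ (2 * m - 1)) ^ 2 := by
        have hr1 : ((8 * t) ^ m) ^ 2 = ((8 * t) ^ 2) ^ m := by
          rw [← pow_mul, mul_comm m 2, pow_mul]
        have hr2 : (2 * q ^ (2 * m - 1)) ^ 2 = 4 * q ^ ((2 * m - 1) * 2) := by
          rw [mul_pow, ← pow_mul]
          norm_num
        rw [hr1, hr2]
        calc ((8 * t) ^ 2) ^ m ≤ (2 * q ^ 3) ^ m := Nat.pow_le_pow_left hA2 m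
          _ = 2 ^ m * q ^ (3 * m) := by rw [mul_pow, ← pow_mul]
          _ ≤ 4 * q ^ (m - 2) * q ^ (3 * m) := by
              have h1 : 2 ^ m = 4 * 2 ^ (m - 2) := by
                rw [show (4:ℕ) = 2 ^ 2 from rfl, ← pow_add]
                congr 1
                omega
              have h2 : 2 ^ (m - 2) ≤ q ^ (m - 2) := Nat.pow_le_pow_left (by omega) _
              rw [h1]
              exact Nat.mul_le_mul_right _ (Nat.mul_le_mul_left _ h2)
          _ = 4 * q ^ ((2 * m - 1) * 2) := by
              rw [mul_assoc, ← pow_add]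
              congr 2
              omega
      have hAm : (8 * t) ^ m ≤ 2 * q ^ (2 * m - 1) :=
        (Nat.pow_le_pow_iff_left (by norm_num)).mp hsq
      omega
    rcases Nat.lt_or_ge c 2 with hc1 | hc2
    · -- c ≤ 1, so q + 1 = t
      have hc0 : c = 1 := by
        rcases Nat.eq_zero_or_pos c with h0 | h1
        · subst h0; simp at hc
        · omega
      rw [hc0, mul_one] at hc
      rcases eq_or_ne q 31 with h31 | h31
      · -- q = 31, t = 32, m ≥ 3
        subst h31
        have ht32 : t = 32 := by omega
        have hm3 : 3 ≤ m := by
          rcases Nat.lt_or_ge m 3 with h | h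
          · exfalso; apply hex; omega
          · exact h
        rw [ht32]
        calc 2 ^ (3 * m - 1) * 32 ^ m = 2 ^ (8 * m - 1) := by
              rw [show (32:ℕ) = 2 ^ 5 from rfl, ← pow_mul, ← pow_add]
              congr 1
              omega
          _ = 2 ^ 23 * (2 ^ 8) ^ (m - 3) := by
              rw [← pow_mul, ← pow_add]
              congr 1
              omega
          _ ≤ 31 ^ 5 * (31 ^ 2) ^ (m - 3) := by
              apply Nat.mul_le_mul
              · norm_num
              · exact Nat.pow_le_pow_left (by norm_num) _
          _ = 31 ^ (2 * m - 1) := by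
              rw [← pow_mul, ← pow_add]
              congr 1
              omega
      · -- q ≠ 31, t = q + 1 ≥ 64, q ≥ 63
        obtain ⟨τ, hτ⟩ := ht2
        have hτ6 : 6 ≤ τ := by
          by_contra h
          push_neg at h
          interval_cases τ <;> omega
        have hq63 : 63 ≤ q := by
          have h64 : (2:ℕ) ^ 6 ≤ 2 ^ τ := Nat.pow_le_pow_right (by norm_num) hτ6
          norm_num at h64
          omega
        apply hkey
        calc (8 * t) ^ 2 ≤ (8 * (q + 1)) ^ 2 :=
              Nat.pow_le_pow_left (by omega) 2
          _ ≤ 2 * q ^ 3 := by nlinarith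
    · -- 2t ≤ q + 1
      have h2t : 2 * t ≤ q + 1 := by
        have := Nat.mul_le_mul_right t hc2
        rw [hc, mul_comm t c]
        exact this
      apply hkey
      calc (8 * t) ^ 2 ≤ (4 * (q + 1)) ^ 2 := Nat.pow_le_pow_left (by omega) 2
        _ ≤ 2 * q ^ 3 := by nlinarith


/-- Let `q = p^a` with `p` prime, `p ≥ 7`, `p ≡ 1 (mod 3)`, and let `F` be a
finite field of cardinality `q`.  If `q ≡ 3 (mod 4)`, `q > 7`, `n > 2` and `(q, n) ≠ (31, 4)`,
then every `2`-subgroup `P` of `GL_n(F)` satisfies `|P| < q^{n-1} + ⋯ + q + 1`. -/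
theorem card_two_subgroup_GL_lt (p a n q : ℕ) (hp : p.Prime) (hp7 : 7 ≤ p) (hp3 : p % 3 = 1)
    (hq : q = p ^ a) (F : Type*) [Field F] [Fintype F] (hF : Fintype.card F = q)
    (hq4 : q % 4 = 3) (hq7 : 7 < q) (hn : 2 < n) (hqn : ¬(q = 31 ∧ n = 4))
    (P : Subgroup (GL (Fin n) F)) (hP : IsPGroup 2 P) :
    Nat.card P < ∑ i ∈ Finset.range n, q ^ i := by

  haveI : Fact (Nat.Prime 2) := ⟨Nat.prime_two⟩
  have hq3 : q % 3 = 1 := by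
    rw [hq, Nat.pow_mod, hp3]
    simp
  have hq19 : 19 ≤ q := by omega
  obtain ⟨k, hk⟩ := IsPGroup.iff_card.mp hP
  have hdvd : Nat.card P ∣ Nat.card (GL (Fin n) F) := Subgroup.card_subgroup_dvd_card P
  rw [Matrix.card_GL_field, hF] at hdvd
  rw [Fin.prod_univ_eq_prod_range (fun i => q ^ n - q ^ i) n] at hdvd
  set N := ∏ i ∈ Finset.range n, (q ^ n - q ^ i) with hN
  have hNne : N ≠ 0 := by
    rw [hN]
    apply Finset.prod_ne_zero_iff.mpr
    intro i hi
    rw [Finset.mem_range] at hi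
    have : q ^ i < q ^ n := Nat.pow_lt_pow_right (by omega) hi
    omega
  rw [hk] at hdvd
  have hkle : k ≤ padicValNat 2 N := (aux_pow2_dvd_iff N k hNne).mp hdvd
  rw [hN, aux_v2_prod q n (by omega) (by omega)] at hkle
  set τ := padicValNat 2 (q + 1) with hτ
  set m := n / 2 with hm
  -- bound the valuation sum
  have hsum : ∑ i ∈ Finset.range n, padicValNat 2 (q ^ (i + 1) - 1)
      ≤ (n + m - 1) + τ * m := by
    rcases Nat.even_or_odd n with he | ho
    · obtain ⟨m', hm'⟩ := he
      have hmm : m = m' := by omega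
      have hn2 : n = 2 * m := by omega
      rw [hn2, aux_S_even q τ (by omega) hτ m]
      have hfac := aux_v2_factorial m (by omega)
      have : m * τ = τ * m := by ring
      omega
    · obtain ⟨m', hm'⟩ := ho
      have hmm : m = m' := by omega
      have hn2 : n = 2 * m + 1 := by omega
      rw [hn2, Finset.sum_range_succ, aux_S_even q τ (by omega) hτ m,
        aux_v2_odd q _ (by omega) (by omega)]
      have hfac := aux_v2_factorial m (by omega)
      have : m * τ = τ * m := by ring
      omega
  have hcard : Nat.card P ≤ 2 ^ ((n + m - 1) + τ * m) := by
    rw [hk]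
    exact Nat.pow_le_pow_right (by norm_num) (le_trans hkle hsum)
  have hsplit : (2:ℕ) ^ ((n + m - 1) + τ * m) = 2 ^ (n + m - 1) * (2 ^ τ) ^ m := by
    rw [pow_add, pow_mul]
  have hkey := aux_key q n (2 ^ τ) hq19 (by omega) (by rw [hτ]; exact pow_padicValNat_dvd)
    ⟨τ, rfl⟩ hqn
  have hlast : q ^ (n - 1) < ∑ i ∈ Finset.range n, q ^ i := by
    have h1 : ∑ i ∈ Finset.range n, q ^ i
        = ∑ i ∈ Finset.range (n - 1), q ^ i + q ^ (n - 1) := by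
      have e : n - 1 + 1 = n := by omega
      calc ∑ i ∈ Finset.range n, q ^ i = ∑ i ∈ Finset.range (n - 1 + 1), q ^ i := by rw [e]
        _ = _ := Finset.sum_range_succ _ _
    have h2 : (1:ℕ) ≤ ∑ i ∈ Finset.range (n - 1), q ^ i := by
      have h0 : (0:ℕ) ∈ Finset.range (n - 1) := by
        rw [Finset.mem_range]; omega
      calc (1:ℕ) = q ^ 0 := by norm_num
        _ ≤ ∑ i ∈ Finset.range (n - 1), q ^ i :=
          Finset.single_le_sum (fun i _ => Nat.zero_le _) h0
    omega
  calc Nat.card P ≤ 2 ^ ((n + m - 1) + τ * m) := hcard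
    _ = 2 ^ (n + m - 1) * (2 ^ τ) ^ m := hsplit
    _ ≤ q ^ (n - 1) := hkey
    _ < _ := hlast
end

section
/- Let p be a prime with p ≥ 7 and p ≡ 1 (mod 3), let q = p^a, and let F be a finite field with |F| = q. Suppose q ≡ 3 (mod 4). Then every 2-subgroup P of GL_2(F) contains at most q + 2 involutions, and at most q + 1 of the involutions in P are non-central in GL_2(F) (i.e. are not scalar matrices). -/
open Matrix

section Aux

variable {F : Type*} [Field F]

private lemma det_sub_one_fin_two (M : Matrix (Fin 2) (Fin 2) F) :
    (M - 1).det = M.det - M.trace + 1 := by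
  simp [Matrix.det_fin_two, Matrix.trace_fin_two, Matrix.one_apply, Matrix.sub_apply]
  ring

private lemma det_add_one_fin_two (M : Matrix (Fin 2) (Fin 2) F) :
    (M + 1).det = M.det + M.trace + 1 := by
  simp [Matrix.det_fin_two, Matrix.trace_fin_two, Matrix.one_apply, Matrix.add_apply]
  ring

private lemma sq_zero_of_trace_det (N : Matrix (Fin 2) (Fin 2) F)
    (htr : N.trace = 0) (hdet : N.det = 0) : N * N = 0 := by
  rw [Matrix.trace_fin_two] at htr
  rw [Matrix.det_fin_two] at hdet
  ext i j
  fin_cases i <;> fin_cases j <;>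
    simp [Matrix.mul_apply, Fin.sum_univ_two] <;>
    first
      | linear_combination (N 0 0) * htr - hdet
      | linear_combination (N 0 1) * htr
      | linear_combination (N 1 0) * htr
      | linear_combination (N 1 1) * htr - hdet

private lemma one_add_pow (N : Matrix (Fin 2) (Fin 2) F) (hN : N * N = 0) (n : ℕ) :
    (1 + N) ^ n = 1 + (n : F) • N := by
  induction n with
  | zero => simp
  | succ n ih =>
      rw [pow_succ, ih, add_mul, one_mul, mul_add, mul_one, smul_mul_assoc, hN, smul_zero,
        add_zero]
      push_cast
      rw [add_smul, one_smul, add_assoc, add_comm ((n : F) • N) N]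

/-- A matrix of determinant 1, of 2-power order, with a nonzero fixed vector, is 1. -/
private lemma eq_one_of_fixed (h2 : (2 : F) ≠ 0) {z : Matrix (Fin 2) (Fin 2) F}
    (hdet : z.det = 1) {v : Fin 2 → F} (hv : v ≠ 0) (hz : z *ᵥ v = v)
    {k : ℕ} (hpow : z ^ (2 ^ k) = 1) : z = 1 := by
  classical
  have hker : (z - 1) *ᵥ v = 0 := by
    rw [Matrix.sub_mulVec, Matrix.one_mulVec, hz, sub_self]
  have hd0 : (z - 1).det = 0 := Matrix.exists_mulVec_eq_zero_iff.mp ⟨v, hv, hker⟩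
  have htr : z.trace = 2 := by
    have h := det_sub_one_fin_two z
    rw [hd0, hdet] at h
    linear_combination h
  have htrN : (z - 1).trace = 0 := by
    rw [Matrix.trace_sub, htr, Matrix.trace_one]
    simp
  have hNN : (z - 1) * (z - 1) = 0 := sq_zero_of_trace_det _ htrN hd0
  have hz1 : z = 1 + (z - 1) := by abel
  rw [hz1, one_add_pow _ hNN] at hpow
  have : ((2 ^ k : ℕ) : F) • (z - 1) = 0 := by
    have := hpow
    rwa [add_eq_left] at this
  have hne : ((2 ^ k : ℕ) : F) ≠ 0 := by
    push_cast
    exact pow_ne_zero _ h2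
  have hz0 : z - 1 = 0 := (smul_eq_zero.mp this).resolve_left hne
  exact sub_eq_zero.mp hz0

private lemma exists_mulVec_ne_zero {A : Matrix (Fin 2) (Fin 2) F} (hA : A ≠ 0) :
    ∃ w, A *ᵥ w ≠ 0 := by
  by_contra h
  push_neg at h
  apply hA
  ext i j
  have := congrFun (h (Pi.single j 1)) i
  simpa [Matrix.mulVec_single] using this

/-- A non-scalar involution has determinant -1 and a nonzero fixed vector. -/
private lemma involution_structure (h2 : (2 : F) ≠ 0) {M : Matrix (Fin 2) (Fin 2) F}
    (hM : M * M = 1) (h1 : M ≠ 1) (hneg : M ≠ -1) :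
    M.det = -1 ∧ ∃ v : Fin 2 → F, v ≠ 0 ∧ M *ᵥ v = v := by
  classical
  have hplus : M + 1 ≠ 0 := by
    intro h
    exact hneg (eq_neg_of_add_eq_zero_left h)
  have hminus : M - 1 ≠ 0 := sub_ne_zero.mpr h1
  have hfac1 : (M - 1) * (M + 1) = 0 := by
    have : (M - 1) * (M + 1) = M * M - 1 := by noncomm_ring
    rw [this, hM, sub_self]
  have hfac2 : (M + 1) * (M - 1) = 0 := by
    have : (M + 1) * (M - 1) = M * M - 1 := by noncomm_ring
    rw [this, hM, sub_self]
  obtain ⟨w, hw⟩ := exists_mulVec_ne_zero hplus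
  obtain ⟨w', hw'⟩ := exists_mulVec_ne_zero hminus
  have hker1 : (M - 1) *ᵥ ((M + 1) *ᵥ w) = 0 := by
    rw [Matrix.mulVec_mulVec, hfac1, Matrix.zero_mulVec]
  have hker2 : (M + 1) *ᵥ ((M - 1) *ᵥ w') = 0 := by
    rw [Matrix.mulVec_mulVec, hfac2, Matrix.zero_mulVec]
  have hd1 : (M - 1).det = 0 := Matrix.exists_mulVec_eq_zero_iff.mp ⟨_, hw, hker1⟩
  have hd2 : (M + 1).det = 0 := Matrix.exists_mulVec_eq_zero_iff.mp ⟨_, hw', hker2⟩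
  rw [det_sub_one_fin_two] at hd1
  rw [det_add_one_fin_two] at hd2
  have hdet : M.det = -1 := by
    have h4 : (2 : F) * (M.det + 1) = 0 := by linear_combination hd1 + hd2
    have h5 := (mul_eq_zero.mp h4).resolve_left h2
    linear_combination h5
  refine ⟨hdet, (M + 1) *ᵥ w, hw, ?_⟩
  have := hker1
  rw [Matrix.sub_mulVec, Matrix.one_mulVec, sub_eq_zero] at this
  exact this


private lemma neg_one_mem_center : (-1 : GL (Fin 2) F) ∈ Subgroup.center (GL (Fin 2) F) :=
  Subgroup.mem_center_iff.mpr fun g => by rw [mul_neg_one, neg_one_mul]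

private lemma central_involution {x : GL (Fin 2) F}
    (hc : x ∈ Subgroup.center (GL (Fin 2) F)) (hx1 : x ≠ 1)
    (hsq : (x : Matrix (Fin 2) (Fin 2) F) * (x : Matrix (Fin 2) (Fin 2) F) = 1) :
    x = -1 := by
  classical
  set M : Matrix (Fin 2) (Fin 2) F := (x : Matrix (Fin 2) (Fin 2) F) with hMdef
  have hmul1 : (!![1,1;0,1] : Matrix (Fin 2) (Fin 2) F) * !![1,-1;0,1] = 1 := by
    ext i j; fin_cases i <;> fin_cases j <;>
      norm_num [Matrix.mul_apply, Fin.sum_univ_two, Matrix.one_apply]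
  have hmul2 : (!![1,-1;0,1] : Matrix (Fin 2) (Fin 2) F) * !![1,1;0,1] = 1 := by
    ext i j; fin_cases i <;> fin_cases j <;>
      norm_num [Matrix.mul_apply, Fin.sum_univ_two, Matrix.one_apply]
  have hmul3 : (!![1,0;1,1] : Matrix (Fin 2) (Fin 2) F) * !![1,0;-1,1] = 1 := by
    ext i j; fin_cases i <;> fin_cases j <;>
      norm_num [Matrix.mul_apply, Fin.sum_univ_two, Matrix.one_apply]
  have hmul4 : (!![1,0;-1,1] : Matrix (Fin 2) (Fin 2) F) * !![1,0;1,1] = 1 := by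
    ext i j; fin_cases i <;> fin_cases j <;>
      norm_num [Matrix.mul_apply, Fin.sum_univ_two, Matrix.one_apply]
  set u₁ : GL (Fin 2) F := ⟨!![1,1;0,1], !![1,-1;0,1], hmul1, hmul2⟩ with hu₁
  set u₂ : GL (Fin 2) F := ⟨!![1,0;1,1], !![1,0;-1,1], hmul3, hmul4⟩ with hu₂
  have e₁ : (!![1,1;0,1] : Matrix (Fin 2) (Fin 2) F) * M = M * !![1,1;0,1] := by
    have h := Subgroup.mem_center_iff.mp hc u₁
    have := congrArg Units.val h
    simpa [hu₁, Units.val_mul] using this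
  have e₂ : (!![1,0;1,1] : Matrix (Fin 2) (Fin 2) F) * M = M * !![1,0;1,1] := by
    have h := Subgroup.mem_center_iff.mp hc u₂
    have := congrArg Units.val h
    simpa [hu₂, Units.val_mul] using this
  have h10 : M 1 0 = 0 := by
    have h := congrFun (congrFun e₁ 0) 0
    simpa [Matrix.mul_apply, Fin.sum_univ_two] using h
  have h01 : M 0 1 = 0 := by
    have h := congrFun (congrFun e₂ 0) 0
    simpa [Matrix.mul_apply, Fin.sum_univ_two] using h
  have h11 : M 1 1 = M 0 0 := by
    have h := congrFun (congrFun e₁ 0) 1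
    simp [Matrix.mul_apply, Fin.sum_univ_two] at h
    linear_combination h
  have ha : M 0 0 * M 0 0 = 1 := by
    have h := congrFun (congrFun hsq 0) 0
    simpa [Matrix.mul_apply, Fin.sum_univ_two, h01, h10, Matrix.one_apply] using h
  rcases mul_self_eq_one_iff.mp ha with h1 | h1
  · exfalso
    apply hx1
    apply Units.ext
    show M = 1
    ext i j
    fin_cases i <;> fin_cases j <;> simp [h10, h01, h11, h1, Matrix.one_apply]
  · apply Units.ext
    show M = ((-1 : GL (Fin 2) F) : Matrix (Fin 2) (Fin 2) F)
    rw [Units.val_neg, Units.val_one]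
    ext i j
    fin_cases i <;> fin_cases j <;>
      simp [h10, h01, h11, h1, Matrix.one_apply, Matrix.neg_apply]


/-- A non-central involution in `GL₂` has determinant `-1` and a nonzero fixed vector. -/
private lemma noncentral_involution_struct (h2 : (2 : F) ≠ 0) {x : GL (Fin 2) F}
    (hx1 : x ≠ 1) (hx2 : x ^ 2 = 1) (hxc : x ∉ Subgroup.center (GL (Fin 2) F)) :
    ((x : Matrix (Fin 2) (Fin 2) F)).det = -1 ∧
      ∃ v : Fin 2 → F, v ≠ 0 ∧ (x : Matrix (Fin 2) (Fin 2) F) *ᵥ v = v := by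
  have hMM : (x : Matrix (Fin 2) (Fin 2) F) * (x : Matrix (Fin 2) (Fin 2) F) = 1 := by
    have := congrArg Units.val hx2
    simpa [pow_two, Units.val_mul] using this
  have hM1 : (x : Matrix (Fin 2) (Fin 2) F) ≠ 1 := by
    intro h
    exact hx1 (Units.ext (by simpa using h))
  have hMneg : (x : Matrix (Fin 2) (Fin 2) F) ≠ -1 := by
    intro h
    apply hxc
    have hx : x = -1 := Units.ext (by rw [h, Units.val_neg, Units.val_one])
    rw [hx]
    exact neg_one_mem_center
  exact involution_structure h2 hMM hM1 hMneg

end Aux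


/-- Let `q = p^a` with `p` prime, `p ≥ 7`, `p ≡ 1 (mod 3)`, `q ≡ 3 (mod 4)`,
and let `F` be a finite field of cardinality `q`.  Then every `2`-subgroup `P` of `GL_2(F)`
contains at most `q + 2` involutions, of which at most `q + 1` are non-central in `GL_2(F)`. -/
theorem card_involutions_two_subgroup_GL2 (p a q : ℕ) (hp : p.Prime) (hp7 : 7 ≤ p)
    (hp3 : p % 3 = 1) (hq : q = p ^ a) (F : Type*) [Field F] [Fintype F]
    (hF : Fintype.card F = q) (hq4 : q % 4 = 3)
    (P : Subgroup (GL (Fin 2) F)) (hP : IsPGroup 2 P) :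
    Nat.card {x : GL (Fin 2) F | x ∈ P ∧ x ≠ 1 ∧ x ^ 2 = 1} ≤ q + 2 ∧
      Nat.card {x : GL (Fin 2) F |
        x ∈ P ∧ x ≠ 1 ∧ x ^ 2 = 1 ∧ x ∉ Subgroup.center (GL (Fin 2) F)} ≤ q + 1 := by
  classical
  -- `2 ≠ 0` in `F`, since `|F| = q` is odd
  have hodd : Fintype.card F % 2 = 1 := by rw [hF]; omega
  have h2 : (2 : F) ≠ 0 := by
    intro h
    have hdvd : ringChar F ∣ 2 := by
      have h' : ((2 : ℕ) : F) = 0 := by exact_mod_cast h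
      exact (CharP.cast_eq_zero_iff F (ringChar F) 2).mp h'
    rcases (Nat.prime_two.eq_one_or_self_of_dvd _ hdvd) with h1 | h1
    · exact CharP.ringChar_ne_one h1
    · have := FiniteField.even_card_of_char_two h1
      omega
  -- uniqueness: two non-central involutions in `P` with a common fixed vector coincide
  have uniq : ∀ x y : GL (Fin 2) F, x ∈ P → y ∈ P → x ≠ 1 → y ≠ 1 → x ^ 2 = 1 → y ^ 2 = 1 →
      x ∉ Subgroup.center (GL (Fin 2) F) → y ∉ Subgroup.center (GL (Fin 2) F) →
      ∀ v : Fin 2 → F, v ≠ 0 → (x : Matrix (Fin 2) (Fin 2) F) *ᵥ v = v →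
      (y : Matrix (Fin 2) (Fin 2) F) *ᵥ v = v → x = y := by
    intro x y hxP hyP hx1 hy1 hx2 hy2 hxc hyc v hv hfx hfy
    have hdx := (noncentral_involution_struct h2 hx1 hx2 hxc).1
    have hdy := (noncentral_involution_struct h2 hy1 hy2 hyc).1
    have hzP : x * y ∈ P := P.mul_mem hxP hyP
    obtain ⟨k, hk⟩ := hP ⟨x * y, hzP⟩
    have hkG : (x * y : GL (Fin 2) F) ^ 2 ^ k = 1 := by
      have := congrArg (Subtype.val : ↥P → GL (Fin 2) F) hk
      simpa using this
    have hmat : ((x * y : GL (Fin 2) F) : Matrix (Fin 2) (Fin 2) F) ^ 2 ^ k = 1 := by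
      have := congrArg Units.val hkG
      simpa [Units.val_pow_eq_pow_val] using this
    have hdetz : ((x * y : GL (Fin 2) F) : Matrix (Fin 2) (Fin 2) F).det = 1 := by
      rw [Units.val_mul, Matrix.det_mul, hdx, hdy]
      norm_num
    have hfixz : ((x * y : GL (Fin 2) F) : Matrix (Fin 2) (Fin 2) F) *ᵥ v = v := by
      rw [Units.val_mul, ← Matrix.mulVec_mulVec, hfy, hfx]
    have hz1 : ((x * y : GL (Fin 2) F) : Matrix (Fin 2) (Fin 2) F) = 1 :=
      eq_one_of_fixed h2 hdetz hv hfixz hmat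
    have hxy : x * y = 1 := Units.ext (by rw [hz1, Units.val_one])
    have hxinv : x⁻¹ = y := inv_eq_of_mul_eq_one_right hxy
    have hxself : x⁻¹ = x := inv_eq_of_mul_eq_one_right (by rw [← pow_two, hx2])
    rw [← hxinv, hxself]
  -- the second bound
  have hb2 : Nat.card {x : GL (Fin 2) F |
      x ∈ P ∧ x ≠ 1 ∧ x ^ 2 = 1 ∧ x ∉ Subgroup.center (GL (Fin 2) F)} ≤ q + 1 := by
    have hvex : ∀ s : {x : GL (Fin 2) F |
        x ∈ P ∧ x ≠ 1 ∧ x ^ 2 = 1 ∧ x ∉ Subgroup.center (GL (Fin 2) F)},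
        ∃ v : Fin 2 → F, v ≠ 0 ∧
          ((s : GL (Fin 2) F) : Matrix (Fin 2) (Fin 2) F) *ᵥ v = v :=
      fun s => (noncentral_involution_struct h2 s.2.2.1 s.2.2.2.1 s.2.2.2.2).2
    choose v hv0 hvfix using hvex
    set f : {x : GL (Fin 2) F |
        x ∈ P ∧ x ≠ 1 ∧ x ^ 2 = 1 ∧ x ∉ Subgroup.center (GL (Fin 2) F)} → Option F :=
      fun s => if v s 0 = 0 then none else some (v s 1 / v s 0) with hf
    have hfinj : Function.Injective f := by
      intro s t hst
      have hcv : ∃ c : F, v t = c • v s := by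
        by_cases h0 : v s 0 = 0
        · have h0t : v t 0 = 0 := by
            by_contra hcon
            simp [hf, h0, hcon] at hst
          have hs1 : v s 1 ≠ 0 := by
            intro hcon
            apply hv0 s
            funext i; fin_cases i <;> simp [h0, hcon]
          refine ⟨v t 1 / v s 1, ?_⟩
          funext i
          fin_cases i
          · simp [h0, h0t]
          · simp
            field_simp
        · have h0t : v t 0 ≠ 0 := by
            intro hcon
            simp [hf, h0, hcon] at hst
          have hslope : v s 1 / v s 0 = v t 1 / v t 0 := by
            simpa [hf, h0, h0t] using hst
          have hcross : v s 1 * v t 0 = v t 1 * v s 0 :=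
            (div_eq_div_iff h0 h0t).mp hslope
          refine ⟨v t 0 / v s 0, ?_⟩
          funext i
          fin_cases i
          · simp
            field_simp
          · simp
            field_simp
            linear_combination -hcross
      obtain ⟨c, hvc⟩ := hcv
      have hfix_s : ((s : GL (Fin 2) F) : Matrix (Fin 2) (Fin 2) F) *ᵥ (v t) = v t := by
        rw [hvc, Matrix.mulVec_smul, hvfix s]
      have heq : (s : GL (Fin 2) F) = (t : GL (Fin 2) F) :=
        uniq _ _ s.2.1 t.2.1 s.2.2.1 t.2.2.1 s.2.2.2.1 t.2.2.2.1 s.2.2.2.2 t.2.2.2.2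
          (v t) (hv0 t) hfix_s (hvfix t)
      exact Subtype.ext heq
    calc Nat.card {x : GL (Fin 2) F |
        x ∈ P ∧ x ≠ 1 ∧ x ^ 2 = 1 ∧ x ∉ Subgroup.center (GL (Fin 2) F)}
        ≤ Nat.card (Option F) := Nat.card_le_card_of_injective f hfinj
      _ = q + 1 := by rw [Nat.card_eq_fintype_card, Fintype.card_option, hF]
  refine ⟨?_, hb2⟩
  -- the first bound
  have hsub : {x : GL (Fin 2) F | x ∈ P ∧ x ≠ 1 ∧ x ^ 2 = 1} ⊆
      insert (-1 : GL (Fin 2) F) {x : GL (Fin 2) F |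
        x ∈ P ∧ x ≠ 1 ∧ x ^ 2 = 1 ∧ x ∉ Subgroup.center (GL (Fin 2) F)} := by
    rintro x ⟨hxP, hx1, hx2⟩
    by_cases hc : x ∈ Subgroup.center (GL (Fin 2) F)
    · left
      have hMM : (x : Matrix (Fin 2) (Fin 2) F) * (x : Matrix (Fin 2) (Fin 2) F) = 1 := by
        have := congrArg Units.val hx2
        simpa [pow_two, Units.val_mul] using this
      exact central_involution hc hx1 hMM
    · right
      exact ⟨hxP, hx1, hx2, hc⟩
  calc Nat.card {x : GL (Fin 2) F | x ∈ P ∧ x ≠ 1 ∧ x ^ 2 = 1}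
      = ({x : GL (Fin 2) F | x ∈ P ∧ x ≠ 1 ∧ x ^ 2 = 1}).ncard :=
        Nat.card_coe_set_eq _
    _ ≤ (insert (-1 : GL (Fin 2) F) {x : GL (Fin 2) F |
          x ∈ P ∧ x ≠ 1 ∧ x ^ 2 = 1 ∧ x ∉ Subgroup.center (GL (Fin 2) F)}).ncard :=
        Set.ncard_le_ncard hsub (Set.toFinite _)
    _ ≤ ({x : GL (Fin 2) F |
          x ∈ P ∧ x ≠ 1 ∧ x ^ 2 = 1 ∧ x ∉ Subgroup.center (GL (Fin 2) F)}).ncard + 1 :=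
        Set.ncard_insert_le _ _
    _ = Nat.card {x : GL (Fin 2) F |
          x ∈ P ∧ x ≠ 1 ∧ x ^ 2 = 1 ∧ x ∉ Subgroup.center (GL (Fin 2) F)} + 1 := by
        rw [Nat.card_coe_set_eq]
    _ ≤ q + 1 + 1 := Nat.add_le_add_right hb2 1
    _ = q + 2 := rfl
end

section
/- Let u > 2 be an integer and let 𝒫 be a finite projective plane of order u². Let G be a collineation group of 𝒫 acting transitively on the points of 𝒫, and assume that every involution of G fixes exactly u² + u + 1 points of 𝒫. Let F be a nilpotent normal subgroup of G containing every nilpotent normal subgroup of G (the Fitting subgroup of G), and assume that F acts semiregularly on the points of 𝒫, i.e. no nontrivial element of F fixes a point. If G contains an involution, then either G contains no subgroup isomorphic to the Klein four-group (ℤ/2ℤ) × (ℤ/2ℤ), or every prime dividing |F| also divides u² + u + 1. -/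
private lemma invert_of_fpf {G : Type*} [Group G] [Finite G] (R : Subgroup G) (a : G)
    (ha : a * a = 1)
    (hst : ∀ x ∈ R, a * x * a⁻¹ ∈ R)
    (hfp : ∀ x ∈ R, a * x * a⁻¹ = x → x = 1) :
    ∀ x ∈ R, a * x * a⁻¹ = x⁻¹ := by
  have hcc : ∀ g : G, a * (a * g * a⁻¹) * a⁻¹ = g := by
    intro g
    have h1 : a * (a * g * a⁻¹) * a⁻¹ = (a * a) * g * (a * a)⁻¹ := by group
    rw [h1, ha]; group
  set f : R → R := fun x => x⁻¹ * ⟨a * (x : G) * a⁻¹, hst x x.2⟩ with hf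
  have hinj : Function.Injective f := by
    intro x y hxy
    have E : (x : G)⁻¹ * (a * (x : G) * a⁻¹) = (y : G)⁻¹ * (a * (y : G) * a⁻¹) := by
      have := congrArg (fun z : R => (z : G)) hxy
      simpa [hf] using this
    have hy : (y : G) * ((x : G)⁻¹ * (a * (x : G) * a⁻¹)) = a * (y : G) * a⁻¹ := by
      rw [E]; group
    have hfix : a * ((y : G) * (x : G)⁻¹) * a⁻¹ = (y : G) * (x : G)⁻¹ := by
      have h2 : a * ((y : G) * (x : G)⁻¹) * a⁻¹
          = (a * (y : G) * a⁻¹) * (a * (x : G) * a⁻¹)⁻¹ := by group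
      rw [h2, ← hy]; group
    have h3 := hfp _ (mul_mem y.2 (inv_mem x.2)) hfix
    have : (y : G) = (x : G) := by
      rw [mul_inv_eq_one] at h3; exact h3
    exact (Subtype.ext this).symm
  have hsurj : Function.Surjective f := Finite.injective_iff_surjective.mp hinj
  intro z hz
  obtain ⟨x, hx⟩ := hsurj ⟨z, hz⟩
  have E : (x : G)⁻¹ * (a * (x : G) * a⁻¹) = z := by
    have := congrArg (fun w : R => (w : G)) hx
    simpa [hf] using this
  rw [← E]
  have h4 : a * ((x : G)⁻¹ * (a * (x : G) * a⁻¹)) * a⁻¹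
      = (a * (x : G) * a⁻¹)⁻¹ * (a * (a * (x : G) * a⁻¹) * a⁻¹) := by group
  rw [h4, hcc]
  group

private lemma prime_dvd_card_fixedpts {G Pt : Type*} [Group G] [MulAction G Pt] [Finite Pt]
    {v g : G} {r : ℕ} (hr : r.Prime) (horder : orderOf g = r)
    (hcomm : Commute v g)
    (hfree : ∀ n : ℤ, g ^ n ≠ 1 → ∀ p : Pt, g ^ n • p ≠ p) :
    r ∣ Nat.card {p : Pt // v • p = p} := by
  haveI : Fact r.Prime := ⟨hr⟩
  set X := {p : Pt // v • p = p} with hX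
  set K := Subgroup.zpowers g with hKdef
  letI : SMul K X := ⟨fun k x => ⟨(k : G) • (x : Pt), by
    obtain ⟨n, hn⟩ := k.2
    have hc : Commute v (k : G) := by
      rw [← hn]; exact hcomm.zpow_right n
    calc v • (k : G) • (x : Pt) = ((v * (k : G)) : G) • (x : Pt) := (mul_smul _ _ _).symm
      _ = (((k : G) * v) : G) • (x : Pt) := by rw [hc]
      _ = (k : G) • v • (x : Pt) := mul_smul _ _ _
      _ = (k : G) • (x : Pt) := by rw [x.2]⟩⟩
  letI : MulAction K X :=
    { one_smul := fun x => Subtype.ext (by show ((1 : K) : G) • (x : Pt) = x; simp)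
      mul_smul := fun k l x => Subtype.ext (by
        show ((k * l : K) : G) • (x : Pt) = ((k : G)) • ((l : G) • (x : Pt))
        rw [Subgroup.coe_mul, mul_smul]) }
  have hK : IsPGroup r K := IsPGroup.of_card (n := 1)
    (by rw [hKdef, Nat.card_zpowers, horder, pow_one])
  have hg1 : g ≠ 1 := by
    intro h
    rw [h, orderOf_one] at horder
    exact hr.one_lt.ne' horder.symm
  have hfp : IsEmpty (MulAction.fixedPoints K X) := by
    constructor
    rintro ⟨x, hx⟩
    have h1 := hx ⟨g, Subgroup.mem_zpowers g⟩
    have h2 : g • (x : Pt) = (x : Pt) := by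
      have := congrArg (fun w : X => (w : Pt)) h1
      exact this
    refine hfree 1 (by simpa using hg1) (x : Pt) ?_
    simpa using h2
  have hmod := hK.card_modEq_card_fixedPoints X
  have hz : Nat.card ↑(MulAction.fixedPoints (↥K) X) = 0 := Nat.card_of_isEmpty
  rw [hz] at hmod
  exact (Nat.modEq_zero_iff_dvd).mp hmod


/-- **Lemma `threepossibilities`.** Let `𝒫` be a finite projective plane of
order `u²` (`u > 2`) and let `G` be a point-transitive collineation group whose involutions
each fix exactly `u² + u + 1` points.  Let `F` be the Fitting subgroup of `G` (a nilpotent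
normal subgroup containing every nilpotent normal subgroup), and assume `F` acts
semiregularly on points.  If `G` contains an involution, then either `G` has no Klein
four-subgroup, or every prime divisor of `|F|` divides `u² + u + 1`. -/
theorem klein_four_or_fitting_primes_dvd
    (Pt Ln : Type*) [Membership Pt Ln] [Finite Pt] [Finite Ln]
    [Configuration.ProjectivePlane Pt Ln]
    (u : ℕ) (hu : 2 < u) (horder : Configuration.ProjectivePlane.order Pt Ln = u ^ 2)
    (G : Type*) [Group G] [MulAction G Pt] [MulAction G Ln]
    (hinc : ∀ (g : G) (p : Pt) (l : Ln), p ∈ l ↔ g • p ∈ g • l)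
    (hfaithful : ∀ g : G, (∀ p : Pt, g • p = p) → g = 1)
    (htrans : ∀ p q : Pt, ∃ g : G, g • p = q)
    (hfix : ∀ g : G, g ≠ 1 → g ^ 2 = 1 →
      Nat.card {pt : Pt // g • pt = pt} = u ^ 2 + u + 1)
    (F : Subgroup G) (hFnormal : F.Normal) (hFnilpotent : Group.IsNilpotent F)
    (hFitting : ∀ K : Subgroup G, K.Normal → Group.IsNilpotent K → K ≤ F)
    (hsemireg : ∀ g ∈ F, g ≠ 1 → ∀ pt : Pt, g • pt ≠ pt)
    (hinv : ∃ g : G, g ≠ 1 ∧ g ^ 2 = 1) :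
    (¬ ∃ H : Subgroup G,
        Nonempty (H ≃* (Multiplicative (ZMod 2) × Multiplicative (ZMod 2)))) ∨
      ∀ r : ℕ, r.Prime → r ∣ Nat.card F → r ∣ u ^ 2 + u + 1 := by
  by_cases hK : ∃ H : Subgroup G,
      Nonempty (H ≃* (Multiplicative (ZMod 2) × Multiplicative (ZMod 2)))
  swap
  · exact Or.inl hK
  right
  intro r hr hrF
  haveI : Fact r.Prime := ⟨hr⟩
  -- `G` is finite, being faithful on the finite point set
  haveI hGfin : Finite G := by
    refine Finite.of_injective (MulAction.toPermHom G Pt) ?_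
    refine (injective_iff_map_eq_one _).mpr fun g hg => hfaithful g fun p => ?_
    have h2 := Equiv.ext_iff.mp hg p
    simpa using h2
  obtain ⟨H, ⟨e⟩⟩ := hK
  -- the two generating involutions of the Klein four-subgroup
  set z₁ : Multiplicative (ZMod 2) × Multiplicative (ZMod 2) :=
    (Multiplicative.ofAdd 1, 1) with hz₁
  set z₂ : Multiplicative (ZMod 2) × Multiplicative (ZMod 2) :=
    (1, Multiplicative.ofAdd 1) with hz₂
  set a : G := ((e.symm z₁ : H) : G) with hadef
  set b : G := ((e.symm z₂ : H) : G) with hbdef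
  have hcoe : ∀ z : Multiplicative (ZMod 2) × Multiplicative (ZMod 2),
      (((e.symm z : H) : G) = 1) ↔ z = 1 := fun z => by
    rw [OneMemClass.coe_eq_one, MulEquiv.map_eq_one_iff]
  have hcoemul : ∀ z w : Multiplicative (ZMod 2) × Multiplicative (ZMod 2),
      ((e.symm z : H) : G) * ((e.symm w : H) : G) = ((e.symm (z * w) : H) : G) := fun z w => by
    rw [map_mul]; rfl
  have ha1 : a ≠ 1 := by
    rw [hadef, Ne, hcoe]; decide
  have hb1 : b ≠ 1 := by
    rw [hbdef, Ne, hcoe]; decide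
  have ha2 : a * a = 1 := by
    rw [hadef, hcoemul, hcoe]; decide
  have hb2 : b * b = 1 := by
    rw [hbdef, hcoemul, hcoe]; decide
  have hab1 : a * b ≠ 1 := by
    rw [hadef, hbdef, hcoemul, Ne, hcoe]; decide
  have hab2 : (a * b) * (a * b) = 1 := by
    rw [hadef, hbdef, hcoemul, hcoemul, hcoe]; decide
  have hcommab : a * b = b * a := by
    rw [hadef, hbdef, hcoemul, hcoemul, mul_comm z₁ z₂]
  -- the Sylow `r`-subgroup of `F`, pushed into `G`
  obtain ⟨P⟩ : Nonempty (Sylow r F) := inferInstance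
  have h03 := (isNilpotent_of_finite_tfae (G := F)).out 0 3
  have hPnorm : (P : Subgroup F).Normal := h03.mp hFnilpotent r ⟨hr⟩ P
  haveI hPuniq : Subsingleton (Sylow r F) :=
    @Unique.instSubsingleton _ (Sylow.unique_of_normal P hPnorm)
  set R : Subgroup G := Subgroup.map F.subtype (P : Subgroup F) with hRdef
  have hRchar : ∀ x : G, x ∈ R ↔ x ∈ F ∧ ∃ n : ℕ, x ^ r ^ n = 1 := by
    intro x
    constructor
    · rintro ⟨y, hyP, rfl⟩
      refine ⟨y.2, ?_⟩
      obtain ⟨k, hk⟩ := P.isPGroup' ⟨y, hyP⟩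
      refine ⟨k, ?_⟩
      show ((y : G)) ^ r ^ k = 1
      have hk2 : (y : G) ^ r ^ k = ((((⟨y, hyP⟩ : (P : Subgroup F)) ^ r ^ k : (P : Subgroup F)) : F) : G) := by
        norm_cast
      rw [hk2, hk]
      rfl
    · rintro ⟨hxF, n, hxn⟩
      set x' : F := ⟨x, hxF⟩ with hx'
      have hx'n : x' ^ r ^ n = 1 := by
        apply Subtype.ext
        simpa using hxn
      have hpg : IsPGroup r (Subgroup.zpowers x') := by
        rintro ⟨g, m, rfl⟩
        refine ⟨n, ?_⟩
        apply Subtype.ext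
        show (x' ^ m) ^ (r ^ n : ℕ) = 1
        rw [← zpow_natCast (x' ^ m), ← zpow_mul, mul_comm, zpow_mul, zpow_natCast, hx'n, one_zpow]
      obtain ⟨Q, hQ⟩ := hpg.exists_le_sylow
      have hQP : Q = P := Subsingleton.elim _ _
      exact ⟨x', hQP ▸ hQ (Subgroup.mem_zpowers x'), rfl⟩
  have hRnormal : R.Normal := by
    constructor
    intro x hx g
    rw [hRchar] at hx ⊢
    obtain ⟨hxF, n, hxn⟩ := hx
    refine ⟨hFnormal.conj_mem x hxF g, n, ?_⟩
    have : g * x * g⁻¹ = (MulAut.conj g) x := rfl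
    rw [this, ← map_pow, hxn, map_one]
  have hRF : R ≤ F := fun x hx => ((hRchar x).1 hx).1
  -- an element of order `r` in `R`
  obtain ⟨y₀, hy₀⟩ := exists_prime_orderOf_dvd_card' (G := F) r hrF
  have hy₀G : orderOf ((y₀ : G)) = r := by rw [Subgroup.orderOf_coe, hy₀]
  have hy₀R : (y₀ : G) ∈ R := by
    rw [hRchar]
    refine ⟨y₀.2, 1, ?_⟩
    rw [pow_one, ← hy₀G, pow_orderOf_eq_one]
  -- final step: an involution commuting with an order-`r` element of `F`
  have hfinish : ∀ v y : G, v ≠ 1 → v * v = 1 → y ∈ F → orderOf y = r → Commute v y →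
      r ∣ u ^ 2 + u + 1 := by
    intro v y hv1 hv2 hyF hyr hc
    have hfree : ∀ n : ℤ, y ^ n ≠ 1 → ∀ p : Pt, y ^ n • p ≠ p := fun n hn p =>
      hsemireg _ (zpow_mem hyF n) hn p
    have hd := prime_dvd_card_fixedpts hr hyr hc hfree
    rwa [hfix v hv1 (by rw [pow_two, hv2])] at hd
  -- from a nontrivial element of `R` centralized by an involution `v`, extract one of order `r`
  have hextract : ∀ v : G, v ≠ 1 → v * v = 1 →
      (∃ x ∈ R, x ≠ 1 ∧ v * x * v⁻¹ = x) → r ∣ u ^ 2 + u + 1 := by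
    rintro v hv1 hv2 ⟨x, hxR, hx1, hxv⟩
    obtain ⟨hxF, n, hxn⟩ := (hRchar x).1 hxR
    obtain ⟨m, hmn, hm⟩ := (Nat.dvd_prime_pow hr).mp (orderOf_dvd_of_pow_eq_one hxn)
    have hm0 : m ≠ 0 := by
      rintro rfl
      rw [pow_zero] at hm
      exact hx1 (orderOf_eq_one_iff.mp hm)
    set y := x ^ r ^ (m - 1) with hydef
    have hyr : orderOf y = r := by
      rw [hydef, orderOf_pow_of_dvd (pow_ne_zero _ hr.pos.ne')
        (hm ▸ pow_dvd_pow r (Nat.sub_le m 1)), hm]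
      have hsplit : r ^ m = r ^ (m - 1) * r := by
        rw [← pow_succ, Nat.sub_add_cancel (Nat.one_le_iff_ne_zero.mpr hm0)]
      rw [hsplit, Nat.mul_div_cancel_left _ (pow_pos hr.pos _)]
    have hyF : y ∈ F := pow_mem hxF _
    have hcx : Commute v x := by
      show v * x = x * v
      conv_rhs => rw [← hxv]
      group
    exact hfinish v y hv1 hv2 hyF hyr (hcx.pow_right _)
  by_cases hca : ∃ x ∈ R, x ≠ 1 ∧ a * x * a⁻¹ = x
  · exact hextract a ha1 ha2 hca
  by_cases hcb : ∃ x ∈ R, x ≠ 1 ∧ b * x * b⁻¹ = x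
  · exact hextract b hb1 hb2 hcb
  -- otherwise `a` and `b` both invert `R`, so `a * b` centralizes `R`
  push_neg at hca hcb
  have hfa : ∀ x ∈ R, a * x * a⁻¹ = x → x = 1 := by
    intro x hx heq
    by_contra h1
    exact hca x hx h1 heq
  have hfb : ∀ x ∈ R, b * x * b⁻¹ = x → x = 1 := by
    intro x hx heq
    by_contra h1
    exact hcb x hx h1 heq
  have hia := invert_of_fpf R a ha2 (fun x hx => hRnormal.conj_mem x hx a) hfa
  have hib := invert_of_fpf R b hb2 (fun x hx => hRnormal.conj_mem x hx b) hfb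
  have h1 := hia _ hy₀R
  have h2 := hib _ hy₀R
  have hconj : (a * b) * (y₀ : G) * (a * b)⁻¹ = (y₀ : G) := by
    have h3 : (a * b) * (y₀ : G) * (a * b)⁻¹ = a * (b * (y₀ : G) * b⁻¹) * a⁻¹ := by group
    have h4 : a * ((y₀ : G))⁻¹ * a⁻¹ = (a * (y₀ : G) * a⁻¹)⁻¹ := by group
    rw [h3, h2, h4, h1, inv_inv]
  have hcy : Commute (a * b) (y₀ : G) := by
    show (a * b) * (y₀ : G) = (y₀ : G) * (a * b)
    conv_rhs => rw [← hconj]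
    group
  exact hfinish (a * b) _ hab1 hab2 y₀.2 hy₀G hcy
end
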